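/- Every rule of the LBF tableau system preserves both cleanliness and satisfiability over increasing domain models: if the formula set at the premise node of a rule application is clean (respectively, satisfiable at some world of some increasing domain model under some relevant assignment), then so is the formula set at (each of, or in the case of (∨) at least one of) the conclusion node(s). In particular, for the (∀) rule: if M,w,π ⊨ ∀yφ ∧ ⋀Γ with Γ Existential-safe, then the set Γ ∪ {φ*[z/y] : z ∈ Dom(σ)} of clean rewritings is satisfiable; and for the (∃) rule: if M,w,π ⊨ ∃xφ ∧ ⋀Γ with Γ clean, then Γ ∪ {φ} is satisfiable. -/

import Mathlib

set_option maxHeartbeats 1000000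

/-! ## Syntax of first-order modal logic (FOML)

Predicate symbols and variables are represented by natural numbers; an atom
`atom p args` applies the predicate symbol `p` to the list of variables `args`
(the arity of `p` in this occurrence is the length of `args`). -/
inductive Formula : Type where
  | atom (p : ℕ) (args : List ℕ)
  | neg  (φ : Formula)
  | and  (φ ψ : Formula)
  | or   (φ ψ : Formula)
  | box  (φ : Formula)
  | dia  (φ : Formula)
  | ex   (x : ℕ) (φ : Formula)
  | all  (x : ℕ) (φ : Formula)
deriving DecidableEq

namespace Formula

def imp (φ ψ : Formula) : Formula := .or φ.neg ψ
def biimp (φ ψ : Formula) : Formula := .and (imp φ ψ) (imp ψ φ)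
/-- a fixed tautology `⊤` -/
def top : Formula := .or (.atom 0 []) (.neg (.atom 0 []))
/-- a fixed contradiction `⊥` -/
def bot : Formula := .and (.atom 0 []) (.neg (.atom 0 []))

end Formula

def bigAnd (l : List Formula) : Formula := l.foldr Formula.and Formula.top
def bigOr  (l : List Formula) : Formula := l.foldr Formula.or Formula.bot

/-! ## Semantics: Kripke structures with world-relative domains -/

structure Model where
  W : Type
  D : Type
  R : W → W → Prop
  dom : W → Set D
  ρ : W → ℕ → Set (List D)

/-- `M` is an increasing domain model: nonempty countable set of worlds, nonempty
countable domain, nonempty local domains that increase along the accessibility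
relation, and interpretations of predicates at a world take values in the local
domain of that world. -/
def Model.Increasing (M : Model) : Prop :=
  Nonempty M.W ∧ Nonempty M.D ∧ Countable M.W ∧ Countable M.D ∧
    (∀ w, (M.dom w).Nonempty) ∧
    (∀ w v, M.R w v → M.dom w ⊆ M.dom v) ∧
    (∀ w p l, l ∈ M.ρ w p → ∀ d ∈ l, d ∈ M.dom w)

def Model.sat (M : Model) : M.W → (ℕ → M.D) → Formula → Prop
  | w, σ, .atom p args => args.map σ ∈ M.ρ w p
  | w, σ, .neg φ => ¬ M.sat w σ φ
  | w, σ, .and φ ψ => M.sat w σ φ ∧ M.sat w σ ψ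
  | w, σ, .or φ ψ => M.sat w σ φ ∨ M.sat w σ ψ
  | w, σ, .box φ => ∀ v, M.R w v → M.sat v σ φ
  | w, σ, .dia φ => ∃ v, M.R w v ∧ M.sat v σ φ
  | w, σ, .ex x φ => ∃ d ∈ M.dom w, M.sat w (Function.update σ x d) φ
  | w, σ, .all x φ => ∀ d ∈ M.dom w, M.sat w (Function.update σ x d) φ

/-- the assignment `σ` is relevant at the world `w` -/
def Model.relevant (M : Model) (w : M.W) (σ : ℕ → M.D) : Prop := ∀ x, σ x ∈ M.dom w

/-- satisfiability over increasing domain models -/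
def Satisfiable (φ : Formula) : Prop :=
  ∃ (M : Model), M.Increasing ∧ ∃ (w : M.W) (σ : ℕ → M.D), M.relevant w σ ∧ M.sat w σ φ
/-! ## Free and bound variables, cleanliness, substitution, α-equivalence -/

namespace Formula

def fv : Formula → Finset ℕ
  | .atom _ args => args.toFinset
  | .neg φ => φ.fv
  | .and φ ψ => φ.fv ∪ ψ.fv
  | .or φ ψ => φ.fv ∪ ψ.fv
  | .box φ => φ.fv
  | .dia φ => φ.fv
  | .ex x φ => φ.fv.erase x
  | .all x φ => φ.fv.erase x

def bv : Formula → Finset ℕ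
  | .atom _ _ => ∅
  | .neg φ => φ.bv
  | .and φ ψ => φ.bv ∪ ψ.bv
  | .or φ ψ => φ.bv ∪ ψ.bv
  | .box φ => φ.bv
  | .dia φ => φ.bv
  | .ex x φ => insert x φ.bv
  | .all x φ => insert x φ.bv

/-- every use of a quantifier in the formula quantifies a distinct variable -/
def uniqueBinders : Formula → Prop
  | .atom _ _ => True
  | .neg φ => φ.uniqueBinders
  | .and φ ψ => φ.uniqueBinders ∧ ψ.uniqueBinders ∧ Disjoint φ.bv ψ.bv
  | .or φ ψ => φ.uniqueBinders ∧ ψ.uniqueBinders ∧ Disjoint φ.bv ψ.bv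
  | .box φ => φ.uniqueBinders
  | .dia φ => φ.uniqueBinders
  | .ex x φ => φ.uniqueBinders ∧ x ∉ φ.bv
  | .all x φ => φ.uniqueBinders ∧ x ∉ φ.bv

/-- a formula is clean if no variable occurs both bound and free in it and
every use of a quantifier quantifies a distinct variable -/
def Clean (φ : Formula) : Prop := φ.uniqueBinders ∧ Disjoint φ.fv φ.bv

/-- `φ.subst y z` is `φ[z/y]`: replace every free occurrence of `y` by `z` -/
def subst (y z : ℕ) : Formula → Formula
  | .atom p args => .atom p (args.map fun v => if v = y then z else v)
  | .neg φ => .neg (φ.subst y z)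
  | .and φ ψ => .and (φ.subst y z) (ψ.subst y z)
  | .or φ ψ => .or (φ.subst y z) (ψ.subst y z)
  | .box φ => .box (φ.subst y z)
  | .dia φ => .dia (φ.subst y z)
  | .ex x φ => if x = y then .ex x φ else .ex x (φ.subst y z)
  | .all x φ => if x = y then .all x φ else .all x (φ.subst y z)

def isLiteralB : Formula → Bool
  | .atom _ _ => true
  | .neg (.atom _ _) => true
  | _ => false

/-- a module is a literal, a `□`-formula, or a `◇`-formula -/
def isModuleB : Formula → Bool
  | .box _ => true
  | .dia _ => true
  | φ => φ.isLiteralB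

/-- the component set `C(φ)` of a formula -/
def comps : Formula → Finset Formula
  | .and φ ψ => φ.comps ∪ ψ.comps
  | .or φ ψ => φ.comps ∪ ψ.comps
  | .ex x φ => insert (.ex x φ) φ.comps
  | .all x φ => insert (.all x φ) φ.comps
  | φ => {φ}

end Formula

/-- α-equivalence (renaming of bound variables) -/
inductive AlphaEq : Formula → Formula → Prop where
  | atom (p : ℕ) (args : List ℕ) : AlphaEq (.atom p args) (.atom p args)
  | neg {φ φ'} : AlphaEq φ φ' → AlphaEq (.neg φ) (.neg φ')
  | and {φ φ' ψ ψ'} : AlphaEq φ φ' → AlphaEq ψ ψ' → AlphaEq (.and φ ψ) (.and φ' ψ')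
  | or {φ φ' ψ ψ'} : AlphaEq φ φ' → AlphaEq ψ ψ' → AlphaEq (.or φ ψ) (.or φ' ψ')
  | box {φ φ'} : AlphaEq φ φ' → AlphaEq (.box φ) (.box φ')
  | dia {φ φ'} : AlphaEq φ φ' → AlphaEq (.dia φ) (.dia φ')
  | ex {x x' : ℕ} {φ φ'}
      (h : ∀ z, z ∉ φ.bv ∪ φ'.bv → AlphaEq (φ.subst x z) (φ'.subst x' z)) :
      AlphaEq (.ex x φ) (.ex x' φ')
  | all {x x' : ℕ} {φ φ'}
      (h : ∀ z, z ∉ φ.bv ∪ φ'.bv → AlphaEq (φ.subst x z) (φ'.subst x' z)) :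
      AlphaEq (.all x φ) (.all x' φ')

/-- a finite set of formulas is clean if the conjunction of its members is clean -/
def CleanSet (Γ : Finset Formula) : Prop :=
  (∀ φ ∈ Γ, φ.uniqueBinders) ∧
    Disjoint (Γ.sup Formula.fv) (Γ.sup Formula.bv) ∧
    (∀ φ ∈ Γ, ∀ ψ ∈ Γ, φ ≠ ψ → Disjoint φ.bv ψ.bv)

/-- `Γ` is Existential-safe: every component of every formula of `Γ` is a module
or universally quantified -/
def ExSafe (Γ : Finset Formula) : Prop :=
  ∀ φ ∈ Γ, ∀ β ∈ φ.comps, β.isModuleB = true ∨ ∃ (x : ℕ) (γ : Formula), β = .all x γ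
/-! ## Tableau nodes and the LBF tableau rules -/

/-- a tableau node `(w : Γ, σ)`: a world name (a sequence of symbols), a finite
set of formulas, and a partial identity assignment represented by its domain -/
structure Node where
  name : List ℕ
  Γ : Finset Formula
  σ : Finset ℕ

/-- the bodies of the `◇`-formulas of `Γ` (listed in some fixed order) -/
noncomputable def diaBodies (Γ : Finset Formula) : List Formula :=
  Γ.toList.filterMap fun φ => match φ with | .dia ψ => some ψ | _ => none

/-- the bodies of the `□`-formulas of `Γ` -/
noncomputable def boxBodies (Γ : Finset Formula) : Finset Formula :=
  (Γ.toList.filterMap fun φ => match φ with | .box ψ => some ψ | _ => none).toFinset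

/-- `Step n cs` : the tableau rule relation; from the premise node `n` one rule
application produces the conclusion nodes `cs` (for the branching rule `(∨)` a
non-deterministic choice of one branch is made). -/
inductive Step : Node → List Node → Prop where
  | and {w Γ σ} {φ ψ : Formula} (h : Formula.and φ ψ ∈ Γ) :
      Step ⟨w, Γ, σ⟩ [⟨w, insert φ (insert ψ (Γ.erase (.and φ ψ))), σ⟩]
  | orL {w Γ σ} {φ ψ : Formula} (h : Formula.or φ ψ ∈ Γ) :
      Step ⟨w, Γ, σ⟩ [⟨w, insert φ (Γ.erase (.or φ ψ)), σ⟩]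
  | orR {w Γ σ} {φ ψ : Formula} (h : Formula.or φ ψ ∈ Γ) :
      Step ⟨w, Γ, σ⟩ [⟨w, insert ψ (Γ.erase (.or φ ψ)), σ⟩]
  | exis {w Γ σ} {x : ℕ} {φ : Formula} (h : Formula.ex x φ ∈ Γ) :
      Step ⟨w, Γ, σ⟩ [⟨w, insert φ (Γ.erase (.ex x φ)), insert x σ⟩]
  | alls {w Γ σ} {y : ℕ} {φ : Formula} (f : ℕ → Formula)
      (h : Formula.all y φ ∈ Γ)
      (hsafe : ExSafe (Γ.erase (.all y φ)))
      (hα : ∀ z ∈ σ, AlphaEq (f z) (φ.subst y z))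
      (hclean : CleanSet ((Γ.erase (.all y φ)) ∪ σ.image f))
      (hσ : ∀ v ∈ σ, v ∉ ((Γ.erase (.all y φ)) ∪ σ.image f).sup Formula.bv) :
      Step ⟨w, Γ, σ⟩ [⟨w, (Γ.erase (.all y φ)) ∪ σ.image f, σ⟩]
  | diam {w Γ σ} (hmod : ∀ φ ∈ Γ, φ.isModuleB = true) (hne : diaBodies Γ ≠ []) :
      Step ⟨w, Γ, σ⟩
        ((diaBodies Γ).zipIdx.map fun p => ⟨w ++ [p.2], insert p.1 (boxBodies Γ), σ⟩)
  | fin {w Γ σ} (hmod : ∀ φ ∈ Γ, φ.isModuleB = true) (hnd : diaBodies Γ = [])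
      (hbox : boxBodies Γ ≠ ∅) :
      Step ⟨w, Γ, σ⟩ [⟨w, Γ.filter (fun φ => φ.isLiteralB = true), σ⟩]

/-! ## Tableaux as finitely branching trees -/

inductive Tab : Type where
  | mk (n : Node) (k : ℕ) (children : Fin k → Tab)

def Tab.label : Tab → Node
  | .mk n _ _ => n

def Tab.isLeaf : Tab → Prop
  | .mk _ k _ => k = 0

/-- a well-formed tableau: the children of every internal node are obtained
from its label by one application of a tableau rule -/
def Tab.WF : Tab → Prop
  | .mk _ 0 _ => True
  | .mk n (k + 1) cs =>
      Step n ((List.ofFn cs).map Tab.label) ∧ ∀ i, (cs i).WF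

/-- `Subtree t s` : `s` is a subtree of `t` -/
inductive Subtree : Tab → Tab → Prop where
  | refl (t : Tab) : Subtree t t
  | child {n k} {cs : Fin k → Tab} {s : Tab} (i : Fin k) (h : Subtree (cs i) s) :
      Subtree (.mk n k cs) s

/-- a tableau is saturated if every leaf node contains only literals -/
def Saturated (t : Tab) : Prop :=
  ∀ s, Subtree t s → s.isLeaf → ∀ φ ∈ s.label.Γ, φ.isLiteralB = true

/-- a tableau is open if no node contains both a formula and its negation -/
def OpenT (t : Tab) : Prop :=
  ∀ s, Subtree t s → ∀ φ : Formula, ¬ (φ ∈ s.label.Γ ∧ Formula.neg φ ∈ s.label.Γ)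

/-- `Extends t' t` : the tableau `t'` extends the (partial) tableau `t` -/
inductive Extends : Tab → Tab → Prop where
  | leaf {t : Tab} {n : Node} {cs : Fin 0 → Tab} (h : t.label = n) :
      Extends t (.mk n 0 cs)
  | node {n : Node} {k : ℕ} {cs cs' : Fin k → Tab} (h : ∀ i, Extends (cs' i) (cs i)) :
      Extends (.mk n k cs') (.mk n k cs)

/-- the node is clean: its formula set is clean and the variables of its
assignment do not occur bound in its formulas -/
def NodeClean (n : Node) : Prop :=
  CleanSet n.Γ ∧ ∀ v ∈ n.σ, v ∉ n.Γ.sup Formula.bv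
/-- a finite set of formulas is (simultaneously) satisfiable in an increasing
domain model with a relevant assignment -/
def SatSet (Γ : Finset Formula) : Prop :=
  ∃ (M : Model), M.Increasing ∧ ∃ (w : M.W) (σ : ℕ → M.D),
    M.relevant w σ ∧ ∀ φ ∈ Γ, M.sat w σ φ

/-- the size (number of symbols) of a formula -/
def Formula.size : Formula → ℕ
  | .atom _ args => 1 + args.length
  | .neg φ => φ.size + 1
  | .and φ ψ => φ.size + ψ.size + 1
  | .or φ ψ => φ.size + ψ.size + 1
  | .box φ => φ.size + 1
  | .dia φ => φ.size + 1
  | .ex _ φ => φ.size + 2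
  | .all _ φ => φ.size + 2

/-- `replComp t r φ` is `φ[r/t]`: the result of replacing the component `t` of
`φ` by `r` (descending only through boolean connectives and quantifiers) -/
def replComp (t r : Formula) (φ : Formula) : Formula :=
  if φ = t then r
  else
    match φ with
    | .and φ₁ φ₂ => .and (replComp t r φ₁) (replComp t r φ₂)
    | .or φ₁ φ₂ => .or (replComp t r φ₁) (replComp t r φ₂)
    | .ex x φ₁ => .ex x (replComp t r φ₁)
    | .all x φ₁ => .all x (replComp t r φ₁)
    | φ' => φ'

/-- the existential prefix `∃y1∃y1'∃y2∃y2'…∃yl∃yl'` given by a list of pairs -/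
def exChain (ys : List (ℕ × ℕ)) (φ : Formula) : Formula :=
  ys.foldr (fun p acc => .ex p.1 (.ex p.2 acc)) φ

/-- the disjunction `⋁_{i≤l} ( ◇ψ[yi/y] ∨ ◇ψ[yi'/y] )` -/
def mkWitDisj (y : ℕ) (ψ : Formula) (ys : List (ℕ × ℕ)) : Formula :=
  bigOr (ys.map fun p => .or (.dia (ψ.subst y p.1)) (.dia (ψ.subst y p.2)))

/-! ### Semantic helper lemmas -/

lemma sat_congr (M : Model) (φ : Formula) : ∀ (w : M.W) (π π' : ℕ → M.D),
    (∀ v ∈ φ.fv, π v = π' v) → (M.sat w π φ ↔ M.sat w π' φ) := by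
  induction φ with
  | atom p args =>
    intro w π π' h
    simp only [Model.sat]
    have : args.map π = args.map π' := by
      apply List.map_congr_left
      intro a ha
      exact h a (by simp [Formula.fv, List.mem_toFinset, ha])
    rw [this]
  | neg φ ih =>
    intro w π π' h
    simp only [Model.sat]
    rw [ih w π π' h]
  | and φ ψ ihφ ihψ =>
    intro w π π' h
    simp only [Model.sat]
    rw [ihφ w π π' (fun v hv => h v (by simp [Formula.fv, hv])),
        ihψ w π π' (fun v hv => h v (by simp [Formula.fv, hv]))]
  | or φ ψ ihφ ihψ =>
    intro w π π' h
    simp only [Model.sat]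
    rw [ihφ w π π' (fun v hv => h v (by simp [Formula.fv, hv])),
        ihψ w π π' (fun v hv => h v (by simp [Formula.fv, hv]))]
  | box φ ih =>
    intro w π π' h
    simp only [Model.sat]
    exact forall₂_congr fun v hv => ih v π π' h
  | dia φ ih =>
    intro w π π' h
    simp only [Model.sat]
    exact exists_congr fun v => and_congr_right fun hv => ih v π π' h
  | ex x φ ih =>
    intro w π π' h
    simp only [Model.sat]
    refine exists_congr fun d => and_congr_right fun hd => ih w _ _ ?_
    intro v hv
    rcases eq_or_ne v x with rfl | hne
    · simp [Function.update]
    · rw [Function.update_of_ne hne, Function.update_of_ne hne]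
      exact h v (by simp [Formula.fv, Finset.mem_erase, hne, hv])
  | all x φ ih =>
    intro w π π' h
    simp only [Model.sat]
    refine forall₂_congr fun d hd => ih w _ _ ?_
    intro v hv
    rcases eq_or_ne v x with rfl | hne
    · simp [Function.update]
    · rw [Function.update_of_ne hne, Function.update_of_ne hne]
      exact h v (by simp [Formula.fv, Finset.mem_erase, hne, hv])

lemma sat_subst (M : Model) (y z : ℕ) (φ : Formula) : ∀ (w : M.W) (π : ℕ → M.D),
    z ∉ φ.bv →
    (M.sat w π (φ.subst y z) ↔ M.sat w (Function.update π y (π z)) φ) := by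
  induction φ with
  | atom p args =>
    intro w π _
    simp only [Formula.subst, Model.sat, List.map_map]
    have : (π ∘ fun v => if v = y then z else v) = Function.update π y (π z) := by
      funext v
      rcases eq_or_ne v y with rfl | hne
      · simp [Function.update]
      · simp [Function.update_of_ne hne, hne]
    rw [this]
  | neg φ ih =>
    intro w π hz
    simp only [Formula.subst, Model.sat]
    rw [ih w π hz]
  | and φ ψ ihφ ihψ =>
    intro w π hz
    simp only [Formula.bv, Finset.mem_union, not_or] at hz
    simp only [Formula.subst, Model.sat]
    rw [ihφ w π hz.1, ihψ w π hz.2]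
  | or φ ψ ihφ ihψ =>
    intro w π hz
    simp only [Formula.bv, Finset.mem_union, not_or] at hz
    simp only [Formula.subst, Model.sat]
    rw [ihφ w π hz.1, ihψ w π hz.2]
  | box φ ih =>
    intro w π hz
    simp only [Formula.subst, Model.sat]
    exact forall₂_congr fun v hv => ih v π hz
  | dia φ ih =>
    intro w π hz
    simp only [Formula.subst, Model.sat]
    exact exists_congr fun v => and_congr_right fun hv => ih v π hz
  | ex x φ ih =>
    intro w π hz
    simp only [Formula.bv, Finset.mem_insert, not_or] at hz
    obtain ⟨hzx, hzφ⟩ := hz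
    simp only [Formula.subst]
    rcases eq_or_ne x y with rfl | hxy
    · simp only [if_pos rfl, Model.sat]
      refine exists_congr fun d => and_congr_right fun hd => ?_
      rw [Function.update_idem]
    · rw [if_neg hxy]
      simp only [Model.sat]
      refine exists_congr fun d => and_congr_right fun hd => ?_
      rw [ih w _ hzφ, Function.update_of_ne hzx,
        Function.update_comm (Ne.symm hxy)]
  | all x φ ih =>
    intro w π hz
    simp only [Formula.bv, Finset.mem_insert, not_or] at hz
    obtain ⟨hzx, hzφ⟩ := hz
    simp only [Formula.subst]
    rcases eq_or_ne x y with rfl | hxy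
    · simp only [if_pos rfl, Model.sat]
      refine forall₂_congr fun d hd => ?_
      rw [Function.update_idem]
    · rw [if_neg hxy]
      simp only [Model.sat]
      refine forall₂_congr fun d hd => ?_
      rw [ih w _ hzφ, Function.update_of_ne hzx,
        Function.update_comm (Ne.symm hxy)]
lemma alphaEq_sat {φ ψ : Formula} (h : AlphaEq φ ψ) (M : Model) :
    ∀ (w : M.W) (π : ℕ → M.D), M.sat w π φ ↔ M.sat w π ψ := by
  induction h with
  | atom p args => intro w π; rfl
  | neg _ ih => intro w π; simp only [Model.sat]; rw [ih w π]
  | and _ _ ih1 ih2 => intro w π; simp only [Model.sat]; rw [ih1 w π, ih2 w π]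
  | or _ _ ih1 ih2 => intro w π; simp only [Model.sat]; rw [ih1 w π, ih2 w π]
  | box _ ih => intro w π; simp only [Model.sat]; exact forall₂_congr fun v _ => ih v π
  | dia _ ih => intro w π; simp only [Model.sat]
                exact exists_congr fun v => and_congr_right fun _ => ih v π
  | @ex x x' φ φ' h ih =>
    intro w π
    obtain ⟨z, hz⟩ := Infinite.exists_notMem_finset
      (φ.bv ∪ φ'.bv ∪ φ.fv ∪ φ'.fv)
    simp only [Finset.mem_union, not_or] at hz
    obtain ⟨⟨⟨hzb, hzb'⟩, hzf⟩, hzf'⟩ := hz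
    simp only [Model.sat]
    refine exists_congr fun d => and_congr_right fun hd => ?_
    have step1 : M.sat w (Function.update π x d) φ ↔
        M.sat w (Function.update π z d) (φ.subst x z) := by
      rw [sat_subst M x z φ w (Function.update π z d) hzb]
      rw [Function.update_self]
      apply sat_congr
      intro v hv
      have hvz : v ≠ z := fun hvz => hzf (hvz ▸ hv)
      rcases eq_or_ne v x with rfl | hvx
      · simp
      · rw [Function.update_of_ne hvx, Function.update_of_ne hvx,
          Function.update_of_ne hvz]
    have step3 : M.sat w (Function.update π z d) (φ'.subst x' z) ↔
        M.sat w (Function.update π x' d) φ' := by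
      rw [sat_subst M x' z φ' w (Function.update π z d) hzb']
      rw [Function.update_self]
      apply sat_congr
      intro v hv
      have hvz : v ≠ z := fun hvz => hzf' (hvz ▸ hv)
      rcases eq_or_ne v x' with rfl | hvx
      · simp
      · rw [Function.update_of_ne hvx, Function.update_of_ne hvx,
          Function.update_of_ne hvz]
    rw [step1, ih z (by simp [hzb, hzb']) w (Function.update π z d), step3]
  | @all x x' φ φ' h ih =>
    intro w π
    obtain ⟨z, hz⟩ := Infinite.exists_notMem_finset
      (φ.bv ∪ φ'.bv ∪ φ.fv ∪ φ'.fv)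
    simp only [Finset.mem_union, not_or] at hz
    obtain ⟨⟨⟨hzb, hzb'⟩, hzf⟩, hzf'⟩ := hz
    simp only [Model.sat]
    refine forall₂_congr fun d hd => ?_
    have step1 : M.sat w (Function.update π x d) φ ↔
        M.sat w (Function.update π z d) (φ.subst x z) := by
      rw [sat_subst M x z φ w (Function.update π z d) hzb]
      rw [Function.update_self]
      apply sat_congr
      intro v hv
      have hvz : v ≠ z := fun hvz => hzf (hvz ▸ hv)
      rcases eq_or_ne v x with rfl | hvx
      · simp
      · rw [Function.update_of_ne hvx, Function.update_of_ne hvx,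
          Function.update_of_ne hvz]
    have step3 : M.sat w (Function.update π z d) (φ'.subst x' z) ↔
        M.sat w (Function.update π x' d) φ' := by
      rw [sat_subst M x' z φ' w (Function.update π z d) hzb']
      rw [Function.update_self]
      apply sat_congr
      intro v hv
      have hvz : v ≠ z := fun hvz => hzf' (hvz ▸ hv)
      rcases eq_or_ne v x' with rfl | hvx
      · simp
      · rw [Function.update_of_ne hvx, Function.update_of_ne hvx,
          Function.update_of_ne hvz]
    rw [step1, ih z (by simp [hzb, hzb']) w (Function.update π z d), step3]
lemma exis_sat (M : Model) (hM : M.Increasing) (w : M.W) (π : ℕ → M.D)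
    (Γ : Finset Formula) (x : ℕ) (φ : Formula)
    (hrel : M.relevant w π)
    (hex : M.sat w π (.ex x φ)) (hΓ : ∀ γ ∈ Γ, M.sat w π γ)
    (hclean : CleanSet (insert (Formula.ex x φ) Γ)) :
    SatSet (insert φ Γ) := by
  obtain ⟨d, hd, hsat⟩ := hex
  refine ⟨M, hM, w, Function.update π x d, ?_, ?_⟩
  · intro v
    rcases eq_or_ne v x with rfl | hne
    · simpa using hd
    · rw [Function.update_of_ne hne]; exact hrel v
  · intro γ hγ
    rcases Finset.mem_insert.1 hγ with rfl | hγ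
    · exact hsat
    · rw [← sat_congr M γ w π (Function.update π x d) ?_]
      · exact hΓ γ hγ
      intro v hv
      have hvx : v ≠ x := by
        intro rfl_eq
        subst rfl_eq
        have hvfv : v ∈ (insert (Formula.ex v φ) Γ).sup Formula.fv :=
          Finset.le_sup (f := Formula.fv) (Finset.mem_insert_of_mem hγ) hv
        have hvbv : v ∈ (insert (Formula.ex v φ) Γ).sup Formula.bv :=
          Finset.le_sup (f := Formula.bv) (Finset.mem_insert_self _ _)
            (by simp [Formula.bv])
        exact Finset.disjoint_left.1 hclean.2.1 hvfv hvbv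
      rw [Function.update_of_ne hvx]

lemma alls_sat (M : Model) (hM : M.Increasing) (w : M.W) (π : ℕ → M.D)
    (Γ : Finset Formula) (y : ℕ) (φ : Formula) (σ : Finset ℕ) (f : ℕ → Formula)
    (hrel : M.relevant w π)
    (hall : M.sat w π (.all y φ)) (hΓ : ∀ γ ∈ Γ, M.sat w π γ)
    (hσbv : ∀ z ∈ σ, z ∉ (insert (Formula.all y φ) Γ).sup Formula.bv)
    (hα : ∀ z ∈ σ, AlphaEq (f z) (φ.subst y z)) :
    SatSet (Γ ∪ σ.image f) := by
  refine ⟨M, hM, w, π, hrel, ?_⟩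
  intro γ hγ
  rcases Finset.mem_union.1 hγ with hγ | hγ
  · exact hΓ γ hγ
  · obtain ⟨z, hz, rfl⟩ := Finset.mem_image.1 hγ
    rw [alphaEq_sat (hα z hz) M w π]
    have hzbv : z ∉ φ.bv := by
      intro hzb
      exact hσbv z hz (Finset.le_sup (f := Formula.bv) (Finset.mem_insert_self _ _)
        (by simp [Formula.bv, hzb]))
    rw [sat_subst M y z φ w π hzbv]
    exact hall (π z) (hrel z)
/-! ### Cleanliness helper lemmas -/

lemma cleanSet_subset {Γ' Γ : Finset Formula} (h : Γ' ⊆ Γ) (hΓ : CleanSet Γ) :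
    CleanSet Γ' := by
  obtain ⟨h1, h2, h3⟩ := hΓ
  refine ⟨fun φ hφ => h1 φ (h hφ), ?_, fun a ha b hb hab => h3 a (h ha) b (h hb) hab⟩
  exact h2.mono (Finset.sup_mono h) (Finset.sup_mono h)

lemma cleanSet_parts {Γ : Finset Formula} {A : Formula} (hΓ : CleanSet Γ) (hA : A ∈ Γ)
    (Δ : Finset Formula)
    (hub : ∀ δ ∈ Δ, δ.uniqueBinders)
    (hfv : ∀ δ ∈ Δ, δ.fv ⊆ A.fv)
    (hbv : ∀ δ ∈ Δ, δ.bv ⊆ A.bv)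
    (hpw : ∀ δ₁ ∈ Δ, ∀ δ₂ ∈ Δ, δ₁ ≠ δ₂ → Disjoint δ₁.bv δ₂.bv) :
    CleanSet (Δ ∪ Γ.erase A) ∧
      (Δ ∪ Γ.erase A).sup Formula.fv ⊆ Γ.sup Formula.fv ∧
      (Δ ∪ Γ.erase A).sup Formula.bv ⊆ Γ.sup Formula.bv := by
  obtain ⟨h1, h2, h3⟩ := hΓ
  have hsupfv : (Δ ∪ Γ.erase A).sup Formula.fv ⊆ Γ.sup Formula.fv := by
    show (Δ ∪ Γ.erase A).sup Formula.fv ≤ Γ.sup Formula.fv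
    refine Finset.sup_le (fun γ hγ => ?_)
    rcases Finset.mem_union.1 hγ with hγ | hγ
    · exact (hfv γ hγ).trans (Finset.le_sup hA)
    · exact Finset.le_sup (Finset.mem_of_mem_erase hγ)
  have hsupbv : (Δ ∪ Γ.erase A).sup Formula.bv ⊆ Γ.sup Formula.bv := by
    show (Δ ∪ Γ.erase A).sup Formula.bv ≤ Γ.sup Formula.bv
    refine Finset.sup_le (fun γ hγ => ?_)
    rcases Finset.mem_union.1 hγ with hγ | hγ
    · exact (hbv γ hγ).trans (Finset.le_sup hA)
    · exact Finset.le_sup (Finset.mem_of_mem_erase hγ)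
  refine ⟨⟨?_, h2.mono hsupfv hsupbv, ?_⟩, hsupfv, hsupbv⟩
  · intro γ hγ
    rcases Finset.mem_union.1 hγ with hγ | hγ
    · exact hub γ hγ
    · exact h1 γ (Finset.mem_of_mem_erase hγ)
  · intro a ha b hb hab
    rcases Finset.mem_union.1 ha with ha | ha <;> rcases Finset.mem_union.1 hb with hb | hb
    · exact hpw a ha b hb hab
    · have hbne : A ≠ b := fun h => ((Finset.mem_erase.1 hb).1 h.symm).elim
      exact ((h3 A hA b (Finset.mem_of_mem_erase hb) hbne).mono_left (hbv a ha))
    · have hane : a ≠ A := (Finset.mem_erase.1 ha).1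
      exact ((h3 a (Finset.mem_of_mem_erase ha) A hA hane).mono_right (hbv b hb))
    · exact h3 a (Finset.mem_of_mem_erase ha) b (Finset.mem_of_mem_erase hb) hab

lemma mem_diaBodies {Γ : Finset Formula} {ψ : Formula} :
    ψ ∈ diaBodies Γ ↔ Formula.dia ψ ∈ Γ := by
  simp only [diaBodies, List.mem_filterMap, Finset.mem_toList]
  constructor
  · rintro ⟨φ, hφ, h⟩
    cases φ <;> simp_all
  · intro h
    exact ⟨.dia ψ, h, rfl⟩

lemma mem_boxBodies {Γ : Finset Formula} {ψ : Formula} :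
    ψ ∈ boxBodies Γ ↔ Formula.box ψ ∈ Γ := by
  simp only [boxBodies, List.mem_toFinset, List.mem_filterMap, Finset.mem_toList]
  constructor
  · rintro ⟨φ, hφ, h⟩
    cases φ <;> simp_all
  · intro h
    exact ⟨.box ψ, h, rfl⟩
lemma step_clean (n : Node) (cs : List Node) (h : Step n cs) (hn : NodeClean n) :
    ∀ c ∈ cs, NodeClean c := by
  obtain ⟨hcl, hσ⟩ := hn
  cases h with
  | @and w Γ σ φ ψ hA =>
    intro c hc
    simp only [List.mem_singleton] at hc
    subst hc
    have hub := hcl.1 _ hA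
    simp only [Formula.uniqueBinders] at hub
    have heq : insert φ (insert ψ (Γ.erase (Formula.and φ ψ)))
        = ({φ, ψ} : Finset Formula) ∪ Γ.erase (Formula.and φ ψ) := by
      ext a; simp [or_assoc]
    have := cleanSet_parts hcl hA {φ, ψ}
      (by intro δ hδ
          simp only [Finset.mem_insert, Finset.mem_singleton] at hδ
          rcases hδ with rfl | rfl
          · exact hub.1
          · exact hub.2.1)
      (by intro δ hδ
          simp only [Finset.mem_insert, Finset.mem_singleton] at hδ
          rcases hδ with rfl | rfl
          · exact Finset.subset_union_left
          · exact Finset.subset_union_right)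
      (by intro δ hδ
          simp only [Finset.mem_insert, Finset.mem_singleton] at hδ
          rcases hδ with rfl | rfl
          · exact Finset.subset_union_left
          · exact Finset.subset_union_right)
      (by intro a ha b hb hab
          simp only [Finset.mem_insert, Finset.mem_singleton] at ha hb
          rcases ha with rfl | rfl <;> rcases hb with rfl | rfl
          · exact absurd rfl hab
          · exact hub.2.2
          · exact hub.2.2.symm
          · exact absurd rfl hab)
    refine ⟨by rw [heq]; exact this.1, ?_⟩
    intro v hv hbv
    rw [heq] at hbv
    exact hσ v hv (this.2.2 hbv)
  | @orL w Γ σ φ ψ hA =>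
    intro c hc
    simp only [List.mem_singleton] at hc
    subst hc
    have hub := hcl.1 _ hA
    simp only [Formula.uniqueBinders] at hub
    have heq : insert φ (Γ.erase (Formula.or φ ψ))
        = ({φ} : Finset Formula) ∪ Γ.erase (Formula.or φ ψ) := by
      ext a; simp
    have := cleanSet_parts hcl hA {φ}
      (by intro δ hδ; rw [Finset.mem_singleton.1 hδ]; exact hub.1)
      (by intro δ hδ; rw [Finset.mem_singleton.1 hδ]; exact Finset.subset_union_left)
      (by intro δ hδ; rw [Finset.mem_singleton.1 hδ]; exact Finset.subset_union_left)
      (by intro a ha b hb hab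
          rw [Finset.mem_singleton.1 ha, Finset.mem_singleton.1 hb] at hab ⊢
          exact absurd rfl hab)
    refine ⟨by rw [heq]; exact this.1, ?_⟩
    intro v hv hbv
    rw [heq] at hbv
    exact hσ v hv (this.2.2 hbv)
  | @orR w Γ σ φ ψ hA =>
    intro c hc
    simp only [List.mem_singleton] at hc
    subst hc
    have hub := hcl.1 _ hA
    simp only [Formula.uniqueBinders] at hub
    have heq : insert ψ (Γ.erase (Formula.or φ ψ))
        = ({ψ} : Finset Formula) ∪ Γ.erase (Formula.or φ ψ) := by
      ext a; simp
    have := cleanSet_parts hcl hA {ψ}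
      (by intro δ hδ; rw [Finset.mem_singleton.1 hδ]; exact hub.2.1)
      (by intro δ hδ; rw [Finset.mem_singleton.1 hδ]; exact Finset.subset_union_right)
      (by intro δ hδ; rw [Finset.mem_singleton.1 hδ]; exact Finset.subset_union_right)
      (by intro a ha b hb hab
          rw [Finset.mem_singleton.1 ha, Finset.mem_singleton.1 hb] at hab ⊢
          exact absurd rfl hab)
    refine ⟨by rw [heq]; exact this.1, ?_⟩
    intro v hv hbv
    rw [heq] at hbv
    exact hσ v hv (this.2.2 hbv)
  | @exis w Γ σ x φ hA =>
    intro c hc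
    simp only [List.mem_singleton] at hc
    subst hc
    obtain ⟨h1, h2, h3⟩ := hcl
    have hub := h1 _ hA
    simp only [Formula.uniqueBinders] at hub
    obtain ⟨ubφ, hxbv⟩ := hub
    set Γ' := insert φ (Γ.erase (Formula.ex x φ)) with hΓ'
    -- key fact 1: x not bound in Γ'
    have k1 : x ∉ Γ'.sup Formula.bv := by
      intro hx
      obtain ⟨γ, hγ, hxγ⟩ := Finset.mem_sup.1 hx
      rcases Finset.mem_insert.1 hγ with rfl | hγ
      · exact hxbv hxγ
      · have hne : Formula.ex x γ ≠ γ := by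
          intro h; exact absurd h (by
            intro h'
            have := congrArg Formula.size h'
            simp [Formula.size] at this)
        have hdisj := h3 (Formula.ex x φ) hA γ (Finset.mem_of_mem_erase hγ)
          (Finset.mem_erase.1 hγ).1.symm
        exact Finset.disjoint_left.1 hdisj (by simp [Formula.bv]) hxγ
    -- key fact 2: bv of Γ' contained in bv of Γ
    have k2 : Γ'.sup Formula.bv ⊆ Γ.sup Formula.bv := by
      intro v hv
      obtain ⟨γ, hγ, hvγ⟩ := Finset.mem_sup.1 hv
      rcases Finset.mem_insert.1 hγ with rfl | hγ
      · exact Finset.mem_sup.2 ⟨_, hA, by simp [Formula.bv, hvγ]⟩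
      · exact Finset.mem_sup.2 ⟨_, Finset.mem_of_mem_erase hγ, hvγ⟩
    refine ⟨⟨?_, ?_, ?_⟩, ?_⟩
    · intro γ hγ
      rcases Finset.mem_insert.1 hγ with rfl | hγ
      · exact ubφ
      · exact h1 γ (Finset.mem_of_mem_erase hγ)
    · rw [Finset.disjoint_left]
      intro v hvf hvb
      obtain ⟨γ, hγ, hvγ⟩ := Finset.mem_sup.1 hvf
      have hvΓbv : v ∈ Γ.sup Formula.bv := k2 hvb
      rcases Finset.mem_insert.1 hγ with rfl | hγ
      · rcases eq_or_ne v x with rfl | hvx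
        · exact k1 hvb
        · have : v ∈ (Formula.ex x γ).fv := by
            simp [Formula.fv, Finset.mem_erase, hvx, hvγ]
          exact Finset.disjoint_left.1 h2 (Finset.mem_sup.2 ⟨_, hA, this⟩) hvΓbv
      · exact Finset.disjoint_left.1 h2
          (Finset.mem_sup.2 ⟨_, Finset.mem_of_mem_erase hγ, hvγ⟩) hvΓbv
    · intro a ha b hb hab
      rcases Finset.mem_insert.1 ha with rfl | ha <;>
        rcases Finset.mem_insert.1 hb with rfl | hb
      · exact absurd rfl hab
      · have : Disjoint (Formula.ex x a).bv b.bv :=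
          h3 _ hA _ (Finset.mem_of_mem_erase hb) (Finset.mem_erase.1 hb).1.symm
        exact this.mono_left (by simp [Formula.bv, Finset.subset_insert])
      · have : Disjoint (Formula.ex x b).bv a.bv :=
          h3 _ hA _ (Finset.mem_of_mem_erase ha) (Finset.mem_erase.1 ha).1.symm
        exact (this.mono_left (by simp [Formula.bv, Finset.subset_insert])).symm
      · exact h3 a (Finset.mem_of_mem_erase ha) b (Finset.mem_of_mem_erase hb) hab
    · intro v hv
      rcases Finset.mem_insert.1 hv with rfl | hv
      · exact k1
      · exact fun hb => hσ v hv (k2 hb)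
  | @alls w Γ σ y φ f hA hsafe hα hclean hσ' =>
    intro c hc
    simp only [List.mem_singleton] at hc
    subst hc
    exact ⟨hclean, hσ'⟩
  | @diam w Γ σ hmod hne =>
    intro c hc
    simp only [List.mem_map] at hc
    obtain ⟨p, hp, rfl⟩ := hc
    have hψΓ : Formula.dia p.1 ∈ Γ := by
      apply mem_diaBodies.1
      have : p.1 ∈ (diaBodies Γ).zipIdx.map Prod.fst := List.mem_map_of_mem hp
      rwa [List.zipIdx_map_fst] at this
    obtain ⟨h1, h2, h3⟩ := hcl
    set Γ' := insert p.1 (boxBodies Γ) with hΓ'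
    have k2 : Γ'.sup Formula.bv ⊆ Γ.sup Formula.bv := by
      intro v hv
      obtain ⟨γ, hγ, hvγ⟩ := Finset.mem_sup.1 hv
      rcases Finset.mem_insert.1 hγ with rfl | hγ
      · exact Finset.mem_sup.2 ⟨_, hψΓ, hvγ⟩
      · exact Finset.mem_sup.2 ⟨_, mem_boxBodies.1 hγ, hvγ⟩
    have k2f : Γ'.sup Formula.fv ⊆ Γ.sup Formula.fv := by
      intro v hv
      obtain ⟨γ, hγ, hvγ⟩ := Finset.mem_sup.1 hv
      rcases Finset.mem_insert.1 hγ with rfl | hγ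
      · exact Finset.mem_sup.2 ⟨_, hψΓ, hvγ⟩
      · exact Finset.mem_sup.2 ⟨_, mem_boxBodies.1 hγ, hvγ⟩
    refine ⟨⟨?_, h2.mono k2f k2, ?_⟩, ?_⟩
    · intro γ hγ
      rcases Finset.mem_insert.1 hγ with h' | h'
      · subst h'; exact h1 (Formula.dia p.1) hψΓ
      · exact h1 (Formula.box γ) (mem_boxBodies.1 h')
    · intro a ha b hb hab
      rcases Finset.mem_insert.1 ha with ha' | ha' <;>
        rcases Finset.mem_insert.1 hb with hb' | hb'
      · exact absurd (ha'.trans hb'.symm) hab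
      · subst ha'
        exact h3 (Formula.dia p.1) hψΓ (Formula.box b) (mem_boxBodies.1 hb')
          (fun h => Formula.noConfusion h)
      · subst hb'
        exact (h3 (Formula.dia p.1) hψΓ (Formula.box a) (mem_boxBodies.1 ha')
          (fun h => Formula.noConfusion h)).symm
      · exact h3 (Formula.box a) (mem_boxBodies.1 ha') (Formula.box b)
          (mem_boxBodies.1 hb') (fun h => hab (by injection h))
    · exact fun v hv hb => hσ v hv (k2 hb)
  | @fin w Γ σ hmod hnd hbox =>
    intro c hc
    simp only [List.mem_singleton] at hc
    subst hc
    refine ⟨cleanSet_subset (Finset.filter_subset _ _) hcl, ?_⟩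
    intro v hv hb
    exact hσ v hv (Finset.mem_of_subset (Finset.sup_mono (Finset.filter_subset _ _)) hb)
lemma step_sat (n : Node) (cs : List Node) (h : Step n cs) (hn : NodeClean n)
    (hsat : SatSet n.Γ) : ∃ cs' : List Node, Step n cs' ∧ ∀ c ∈ cs', SatSet c.Γ := by
  obtain ⟨M, hM, w0, π, hrel, hs⟩ := hsat
  cases h with
  | @and w Γ σ φ ψ hA =>
    refine ⟨_, Step.and hA, ?_⟩
    intro c hc
    simp only [List.mem_singleton] at hc; subst hc
    refine ⟨M, hM, w0, π, hrel, ?_⟩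
    intro γ hγ
    have hs' := hs _ hA
    simp only [Model.sat] at hs'
    rcases Finset.mem_insert.1 hγ with h' | hγ
    · subst h'; exact hs'.1
    rcases Finset.mem_insert.1 hγ with h' | hγ
    · subst h'; exact hs'.2
    · exact hs γ (Finset.mem_of_mem_erase hγ)
  | @orL w Γ σ φ ψ hA =>
    have hs' := hs _ hA
    simp only [Model.sat] at hs'
    rcases hs' with hφ | hψ
    · refine ⟨_, Step.orL hA, ?_⟩
      intro c hc
      simp only [List.mem_singleton] at hc; subst hc
      refine ⟨M, hM, w0, π, hrel, ?_⟩
      intro γ hγ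
      rcases Finset.mem_insert.1 hγ with h' | hγ
      · subst h'; exact hφ
      · exact hs γ (Finset.mem_of_mem_erase hγ)
    · refine ⟨_, Step.orR hA, ?_⟩
      intro c hc
      simp only [List.mem_singleton] at hc; subst hc
      refine ⟨M, hM, w0, π, hrel, ?_⟩
      intro γ hγ
      rcases Finset.mem_insert.1 hγ with h' | hγ
      · subst h'; exact hψ
      · exact hs γ (Finset.mem_of_mem_erase hγ)
  | @orR w Γ σ φ ψ hA =>
    have hs' := hs _ hA
    simp only [Model.sat] at hs'
    rcases hs' with hφ | hψ
    · refine ⟨_, Step.orL hA, ?_⟩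
      intro c hc
      simp only [List.mem_singleton] at hc; subst hc
      refine ⟨M, hM, w0, π, hrel, ?_⟩
      intro γ hγ
      rcases Finset.mem_insert.1 hγ with h' | hγ
      · subst h'; exact hφ
      · exact hs γ (Finset.mem_of_mem_erase hγ)
    · refine ⟨_, Step.orR hA, ?_⟩
      intro c hc
      simp only [List.mem_singleton] at hc; subst hc
      refine ⟨M, hM, w0, π, hrel, ?_⟩
      intro γ hγ
      rcases Finset.mem_insert.1 hγ with h' | hγ
      · subst h'; exact hψ
      · exact hs γ (Finset.mem_of_mem_erase hγ)
  | @exis w Γ σ x φ hA =>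
    refine ⟨_, Step.exis hA, ?_⟩
    intro c hc
    simp only [List.mem_singleton] at hc; subst hc
    apply exis_sat M hM w0 π (Γ.erase (Formula.ex x φ)) x φ hrel (hs _ hA)
      (fun γ hγ => hs γ (Finset.mem_of_mem_erase hγ))
    rw [Finset.insert_erase hA]
    exact hn.1
  | @alls w Γ σ y φ f hA hsafe hα hclean hσ' =>
    refine ⟨_, Step.alls f hA hsafe hα hclean hσ', ?_⟩
    intro c hc
    simp only [List.mem_singleton] at hc; subst hc
    apply alls_sat M hM w0 π (Γ.erase (Formula.all y φ)) y φ σ f hrel (hs _ hA)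
      (fun γ hγ => hs γ (Finset.mem_of_mem_erase hγ)) ?_ hα
    intro z hz
    rw [Finset.insert_erase hA]
    exact hn.2 z hz
  | @diam w Γ σ hmod hne =>
    refine ⟨_, Step.diam hmod hne, ?_⟩
    intro c hc
    simp only [List.mem_map] at hc
    obtain ⟨p, hp, rfl⟩ := hc
    have hψΓ : Formula.dia p.1 ∈ Γ := by
      apply mem_diaBodies.1
      have : p.1 ∈ (diaBodies Γ).zipIdx.map Prod.fst := List.mem_map_of_mem hp
      rwa [List.zipIdx_map_fst] at this
    have hs' := hs _ hψΓ
    simp only [Model.sat] at hs'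
    obtain ⟨v, hRv, hψv⟩ := hs'
    have hmono := hM.2.2.2.2.2.1
    refine ⟨M, hM, v, π, fun x => hmono w0 v hRv (hrel x), ?_⟩
    intro γ hγ
    rcases Finset.mem_insert.1 hγ with h' | hγ
    · subst h'; exact hψv
    · have := hs _ (mem_boxBodies.1 hγ)
      simp only [Model.sat] at this
      exact this v hRv
  | @fin w Γ σ hmod hnd hbox =>
    refine ⟨_, Step.fin hmod hnd hbox, ?_⟩
    intro c hc
    simp only [List.mem_singleton] at hc; subst hc
    exact ⟨M, hM, w0, π, hrel, fun γ hγ => hs γ (Finset.mem_of_mem_filter _ hγ)⟩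
/-- Every rule of the LBF tableau system preserves both
cleanliness and satisfiability over increasing domain models: every rule
application with a clean premise has clean conclusions, and whenever a rule is
applicable to a clean satisfiable premise, some application of a rule produces
only satisfiable conclusion nodes (for the `(∨)` rule this is the choice of at
least one of the two branches).  In particular, for the `(∀)` rule: if
`M,w,π ⊨ ∀yφ ∧ ⋀Γ` with `Γ` Existential-safe and clean rewritings
`φ*[z/y]` (`z ∈ Dom(σ)`), then `Γ ∪ {φ*[z/y] : z ∈ Dom(σ)}` is satisfiable; and
for the `(∃)` rule: if `M,w,π ⊨ ∃xφ ∧ ⋀Γ` with `{∃xφ} ∪ Γ` clean, then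
`Γ ∪ {φ}` is satisfiable. -/
theorem lbf_rules_preserve_clean_and_sat :
    -- every rule application preserves cleanliness
    (∀ (n : Node) (cs : List Node), Step n cs → NodeClean n →
      ∀ c ∈ cs, NodeClean c) ∧
    -- whenever a rule is applicable, some rule application preserves satisfiability
    (∀ (n : Node) (cs : List Node), Step n cs → NodeClean n → SatSet n.Γ →
      ∃ cs' : List Node, Step n cs' ∧ ∀ c ∈ cs', SatSet c.Γ) ∧
    -- the (∀) rule preserves satisfiability
    (∀ (M : Model), M.Increasing → ∀ (w : M.W) (π : ℕ → M.D) (Γ : Finset Formula)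
        (y : ℕ) (φ : Formula) (σ : Finset ℕ) (f : ℕ → Formula),
      M.relevant w π →
      M.sat w π (.all y φ) → (∀ γ ∈ Γ, M.sat w π γ) →
      ExSafe Γ →
      CleanSet (insert (Formula.all y φ) Γ) →
      (∀ z ∈ σ, z ∉ (insert (Formula.all y φ) Γ).sup Formula.bv) →
      (∀ z ∈ σ, AlphaEq (f z) (φ.subst y z)) →
      CleanSet (Γ ∪ σ.image f) →
      SatSet (Γ ∪ σ.image f)) ∧
    -- the (∃) rule preserves satisfiability
    (∀ (M : Model), M.Increasing → ∀ (w : M.W) (π : ℕ → M.D) (Γ : Finset Formula)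
        (x : ℕ) (φ : Formula),
      M.relevant w π →
      M.sat w π (.ex x φ) → (∀ γ ∈ Γ, M.sat w π γ) →
      CleanSet (insert (Formula.ex x φ) Γ) →
      SatSet (insert φ Γ)) := by
  refine ⟨step_clean, step_sat, ?_, ?_⟩
  · intro M hM w π Γ y φ σ f hrel hall hΓ _ _ hσbv hα _
    exact alls_sat M hM w π Γ y φ σ f hrel hall hΓ hσbv hα
  · intro M hM w π Γ x φ hrel hex hΓ hclean
    exact exis_sat M hM w π Γ x φ hrel hex hΓ hclean
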